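/- Let (V, ω) be a symplectic vector space and U ⊆ V a subspace, and let W ⊆ U be a hyperplane in U (codimension 1). Let K = ker(ω|_U) and A = K ∩ W, E = ker(ω|_W). Then either A = E (which happens exactly when K is not contained in W, i.e., K is transversal to W in U), or A ⊊ E and dim E − dim A = 1. -/

import Mathlib

/-- The kernel of the restriction of a bilinear form `ω` on `V` to a subspace `S`:
`{v ∈ S : ω(v, s) = 0 for all s ∈ S}`. -/
def restKer {V : Type*} [AddCommGroup V] [Module ℝ V]
    (ω : LinearMap.BilinForm ℝ V) (S : Submodule ℝ V) : Submodule ℝ V :=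
  S ⊓ ⨅ s ∈ S, LinearMap.ker (ω.flip s)

section Aux

variable {V : Type*} [AddCommGroup V] [Module ℝ V] (ω : LinearMap.BilinForm ℝ V)

lemma restKer_eq (href : ω.IsRefl) (S : Submodule ℝ V) :
    restKer ω S = S ⊓ ω.orthogonal S := by
  ext v
  simp only [restKer, Submodule.mem_inf, Submodule.mem_iInf, LinearMap.mem_ker,
    LinearMap.flip_apply, LinearMap.BilinForm.mem_orthogonal_iff,
    LinearMap.BilinForm.isOrtho_def]
  exact and_congr_right fun _ =>
    ⟨fun h s hs => href _ _ (h s hs), fun h s hs => href _ _ (h s hs)⟩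

lemma orthogonal_sup' (S T : Submodule ℝ V) :
    ω.orthogonal (S ⊔ T) = ω.orthogonal S ⊓ ω.orthogonal T := by
  ext v
  simp only [Submodule.mem_inf, LinearMap.BilinForm.mem_orthogonal_iff,
    LinearMap.BilinForm.isOrtho_def]
  constructor
  · intro h
    exact ⟨fun s hs => h s (Submodule.mem_sup_left hs),
      fun t ht => h t (Submodule.mem_sup_right ht)⟩
  · rintro ⟨h1, h2⟩ x hx
    obtain ⟨s, hs, t, ht, rfl⟩ := Submodule.mem_sup.mp hx
    simp [map_add, LinearMap.add_apply, h1 s hs, h2 t ht]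

lemma sup_span_hyperplane [FiniteDimensional ℝ V] (U W : Submodule ℝ V) (hWU : W ≤ U)
    (hcodim : Module.finrank ℝ W + 1 = Module.finrank ℝ U) {u : V}
    (hu : u ∈ U) (hnu : u ∉ W) : W ⊔ Submodule.span ℝ {u} = U := by
  have hle : W ⊔ Submodule.span ℝ {u} ≤ U :=
    sup_le hWU (Submodule.span_le.mpr (by simpa using hu))
  have hlt : W < W ⊔ Submodule.span ℝ {u} :=
    lt_of_le_of_ne le_sup_left (fun h => hnu
      (h ▸ Submodule.mem_sup_right (Submodule.mem_span_singleton_self u)))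
  have h1 : Module.finrank ℝ W < Module.finrank ℝ ↥(W ⊔ Submodule.span ℝ {u}) :=
    Submodule.finrank_lt_finrank_of_lt hlt
  exact Submodule.eq_of_le_of_finrank_le hle (by omega)

end Aux

/-- Let `(V, ω)` be a symplectic vector space, `U ⊆ V` a subspace and
`W ⊆ U` a hyperplane in `U`.  Set `K = ker(ω|_U)`, `A = K ∩ W`, `E = ker(ω|_W)`.
Then `A = E` exactly when `K` is not contained in `W` (i.e. `K` is transversal to `W`
in `U`), and otherwise `A ⊊ E` with `dim E = dim A + 1`. -/
theorem stmt11 (V : Type*) [AddCommGroup V] [Module ℝ V] [FiniteDimensional ℝ V]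
    (ω : LinearMap.BilinForm ℝ V)
    (halt : ∀ v : V, ω v v = 0)
    (hnd : ∀ v : V, (∀ w : V, ω v w = 0) → v = 0)
    (U W : Submodule ℝ V) (hWU : W ≤ U)
    (hcodim : Module.finrank ℝ W + 1 = Module.finrank ℝ U) :
    letI K := restKer ω U
    letI A := K ⊓ W
    letI E := restKer ω W
    (A = E ↔ ¬ K ≤ W) ∧
    (A ≠ E → A < E ∧ Module.finrank ℝ E = Module.finrank ℝ A + 1) := by
  have hAlt : ω.IsAlt := halt
  have href : ω.IsRefl := hAlt.isRefl
  have hN : ω.Nondegenerate := (LinearMap.IsRefl.nondegenerate_iff_separatingLeft href).mpr hnd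
  set Up := ω.orthogonal U with hUpdef
  set Wp := ω.orthogonal W with hWpdef
  have hUpWp : Up ≤ Wp := by
    intro m hm
    rw [LinearMap.BilinForm.mem_orthogonal_iff] at hm ⊢
    exact fun n hn => hm n (hWU hn)
  have hKeq : restKer ω U = U ⊓ Up := restKer_eq ω href U
  have hEeq : restKer ω W = W ⊓ Wp := restKer_eq ω href W
  have hAeq : restKer ω U ⊓ W = W ⊓ Up := by
    rw [hKeq]
    ext v
    simp only [Submodule.mem_inf]
    exact ⟨fun h => ⟨h.2, h.1.2⟩, fun h => ⟨⟨hWU h.1, h.2⟩, h.1⟩⟩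
  have hAE : restKer ω U ⊓ W ≤ restKer ω W := by
    rw [hAeq, hEeq]
    exact inf_le_inf_left W hUpWp
  -- Case 1: K is not contained in W
  have case1 : ¬ restKer ω U ≤ W → restKer ω U ⊓ W = restKer ω W := by
    intro hK
    obtain ⟨k, hkK, hkW⟩ := SetLike.not_le_iff_exists.mp hK
    rw [hKeq, Submodule.mem_inf] at hkK
    obtain ⟨hkU, hkUp⟩ := hkK
    have hsup : W ⊔ Submodule.span ℝ {k} = U :=
      sup_span_hyperplane U W hWU hcodim hkU hkW
    refine le_antisymm hAE ?_
    rw [hAeq, hEeq]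
    rintro e he
    rw [Submodule.mem_inf] at he
    obtain ⟨heW, heWp⟩ := he
    rw [Submodule.mem_inf]
    refine ⟨heW, ?_⟩
    rw [LinearMap.BilinForm.mem_orthogonal_iff]
    intro x hx
    rw [← hsup] at hx
    obtain ⟨w, hw, t, ht, rfl⟩ := Submodule.mem_sup.mp hx
    obtain ⟨c, rfl⟩ := Submodule.mem_span_singleton.mp ht
    have h1 : ω w e = 0 := LinearMap.BilinForm.mem_orthogonal_iff.mp heWp w hw
    have h2 : ω k e = 0 :=
      href _ _ (LinearMap.BilinForm.mem_orthogonal_iff.mp hkUp e (hWU heW))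
    show ω (w + c • k) e = 0
    simp [map_add, map_smul, LinearMap.add_apply, LinearMap.smul_apply, h1, h2]
  -- Case 2: K ≤ W gives the dimension formula
  have case2 : restKer ω U ≤ W →
      Module.finrank ℝ ↥(restKer ω W) = Module.finrank ℝ ↥(restKer ω U ⊓ W) + 1 := by
    intro hK
    have key : U ⊓ Wp ≤ W := by
      rintro u hu
      rw [Submodule.mem_inf] at hu
      obtain ⟨huU, huWp⟩ := hu
      by_contra hnW
      have hsup : W ⊔ Submodule.span ℝ {u} = U :=
        sup_span_hyperplane U W hWU hcodim huU hnW
      have huK : u ∈ restKer ω U := by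
        rw [hKeq, Submodule.mem_inf]
        refine ⟨huU, ?_⟩
        rw [LinearMap.BilinForm.mem_orthogonal_iff]
        intro x hx
        rw [← hsup] at hx
        obtain ⟨w, hw, t, ht, rfl⟩ := Submodule.mem_sup.mp hx
        obtain ⟨c, rfl⟩ := Submodule.mem_span_singleton.mp ht
        have h1 : ω w u = 0 := LinearMap.BilinForm.mem_orthogonal_iff.mp huWp w hw
        show ω (w + c • u) u = 0
        simp [map_add, map_smul, LinearMap.add_apply, LinearMap.smul_apply, h1, halt u]
      exact hnW (hK huK)
    have hEeq2 : restKer ω W = U ⊓ Wp := by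
      rw [hEeq]
      ext v
      simp only [Submodule.mem_inf]
      exact ⟨fun h => ⟨hWU h.1, h.2⟩,
        fun h => ⟨key (Submodule.mem_inf.mpr h), h.2⟩⟩
    have hUWp : U ⊓ Wp = ω.orthogonal (W ⊔ Up) := by
      rw [orthogonal_sup', hUpdef, LinearMap.BilinForm.orthogonal_orthogonal hN href U,
        ← hWpdef, inf_comm]
    have h1 : Module.finrank ℝ ↥(ω.orthogonal (W ⊔ Up)) =
        Module.finrank ℝ V - Module.finrank ℝ ↥(W ⊔ Up) :=
      LinearMap.BilinForm.finrank_orthogonal hN _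
    have h2 : Module.finrank ℝ ↥((W : Submodule ℝ V) ⊔ Up) + Module.finrank ℝ ↥(W ⊓ Up) =
        Module.finrank ℝ W + Module.finrank ℝ Up :=
      Submodule.finrank_sup_add_finrank_inf_eq W Up
    have h3 : Module.finrank ℝ Up = Module.finrank ℝ V - Module.finrank ℝ U :=
      LinearMap.BilinForm.finrank_orthogonal hN U
    have h4 : Module.finrank ℝ U ≤ Module.finrank ℝ V := Submodule.finrank_le U
    have h5 : Module.finrank ℝ ↥((W : Submodule ℝ V) ⊔ Up) ≤ Module.finrank ℝ V :=
      Submodule.finrank_le _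
    rw [hEeq2, hUWp, hAeq]
    omega
  refine ⟨⟨?_, case1⟩, ?_⟩
  · intro hAeqE hKW
    have h := case2 hKW
    rw [hAeqE] at h
    omega
  · intro hne
    have hKW : restKer ω U ≤ W := by
      by_contra h
      exact hne (case1 h)
    exact ⟨lt_of_le_of_ne hAE hne, case2 hKW⟩
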